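/- Let S be a semidomain. Then S satisfies ACCP if and only if the Laurent polynomial semidomain S[x^{±1}] satisfies ACCP. -/

import Mathlib

open Polynomial

/-- A witness that the commutative semiring `S` embeds into an integral domain. -/
structure SemidomainWitness (S : Type) [CommSemiring S] : Type 1 where
  R : Type
  [commRing : CommRing R]
  [isDomain : IsDomain R]
  f : S →+* R
  inj : Function.Injective f

/-- A semidomain is a commutative semiring that embeds into an integral domain. -/
def IsSemidomain (S : Type) [CommSemiring S] : Prop :=
  Nonempty (SemidomainWitness S)


/-- A commutative monoid with zero satisfies the ascending chain condition on principal ideals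
(of its monoid of nonzero elements) if every ascending chain of principal ideals
`b₀M ⊆ b₁M ⊆ ⋯` with each `bₙ` nonzero stabilizes. -/
def SatisfiesACCP (M : Type) [CommMonoidWithZero M] : Prop :=
  ∀ f : ℕ → M, (∀ n, f n ≠ 0) → (∀ n, f (n + 1) ∣ f n) →
    ∃ N, ∀ n, N ≤ n → f N ∣ f n

section Aux

open LaurentPolynomial

variable {S : Type} [CommSemiring S]

lemma IsSemidomain.noZeroDivisors (hS : IsSemidomain S) : NoZeroDivisors S := by
  obtain ⟨w⟩ := hS
  letI := w.commRing; letI := w.isDomain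
  refine ⟨fun {a b} h => ?_⟩
  have h2 : w.f a * w.f b = 0 := by rw [← map_mul, h, map_zero]
  rcases mul_eq_zero.mp h2 with h' | h'
  · exact Or.inl (w.inj (by rw [h', map_zero]))
  · exact Or.inr (w.inj (by rw [h', map_zero]))

lemma IsSemidomain.eq_one_of_mul_self (hS : IsSemidomain S) {a b : S} (ha : a ≠ 0)
    (h : b * a = a) : b = 1 := by
  obtain ⟨w⟩ := hS
  letI := w.commRing; letI := w.isDomain
  have hfa : w.f a ≠ 0 := fun hz => ha (w.inj (by rw [hz, map_zero]))
  apply w.inj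
  have h2 : w.f b * w.f a = 1 * w.f a := by rw [← map_mul, h, one_mul]
  rw [map_one]
  exact mul_right_cancel₀ hfa h2

lemma chain_dvd {M : Type} [Monoid M] (f : ℕ → M) (h : ∀ n, f (n + 1) ∣ f n) :
    ∀ m n, m ≤ n → f n ∣ f m := by
  intro m n hmn
  induction n, hmn using Nat.le_induction with
  | base => exact dvd_rfl
  | succ n hmn ih => exact (h n).trans ih

/-- Every nonzero Laurent polynomial is, up to a power of `T`, a polynomial with nonzero
constant coefficient. -/
lemma exists_rep (f : LaurentPolynomial S) (hf : f ≠ 0) :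
    ∃ (p : S[X]) (m : ℤ), p.coeff 0 ≠ 0 ∧ p.toLaurent = f * T m := by
  obtain ⟨n, q, hq⟩ := f.exists_T_pow
  have hq0 : q ≠ 0 := by
    intro h0
    rw [h0, map_zero] at hq
    exact hf (((isUnit_T (n : ℤ)).mul_left_eq_zero).mp hq.symm)
  obtain ⟨k, hk⟩ : ∃ k, k = q.natTrailingDegree := ⟨_, rfl⟩
  have hXdvd : (X : S[X]) ^ k ∣ q :=
    X_pow_dvd_iff.mpr fun d hd => coeff_eq_zero_of_lt_natTrailingDegree (hk ▸ hd)
  obtain ⟨p, hp⟩ := hXdvd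
  refine ⟨p, (n : ℤ) - (k : ℤ), ?_, ?_⟩
  · have h1 : q.coeff k ≠ 0 := by
      rw [hk]; exact Polynomial.coeff_natTrailingDegree_ne_zero.mpr hq0
    rw [hp] at h1
    have h2 : (X ^ k * p).coeff (0 + k) = p.coeff 0 := coeff_X_pow_mul p k 0
    rw [zero_add] at h2
    rwa [h2] at h1
  · have h1 : (T (k : ℤ) : S[T;T⁻¹]) * p.toLaurent = f * T (n : ℤ) := by
      rw [← Polynomial.toLaurent_X_pow, ← map_mul, ← hp, hq]
    calc p.toLaurent
        = T (-(k : ℤ)) * (T (k : ℤ) * p.toLaurent) := by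
          rw [← mul_assoc, ← T_add, neg_add_cancel, T_zero, one_mul]
      _ = f * T ((n : ℤ) - (k : ℤ)) := by
          rw [h1, T_sub]; ring

/-- Two polynomials with nonzero constant coefficient that agree as Laurent polynomials up to a
power of `T` are equal. -/
lemma poly_eq_of_toLaurent_eq_mul_T {p r : S[X]} (hp : p.coeff 0 ≠ 0)
    (hr : r.coeff 0 ≠ 0) {m : ℤ} (h : p.toLaurent = r.toLaurent * T m) : p = r := by
  rcases m with n | n
  · have h' : p.toLaurent = (r * X ^ n).toLaurent := by
      rw [map_mul, Polynomial.toLaurent_X_pow, h]; rfl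
    have hpr : p = r * X ^ n := Polynomial.toLaurent_injective h'
    rcases Nat.eq_zero_or_pos n with h0 | h0
    · rw [hpr, h0, pow_zero, mul_one]
    · exfalso
      apply hp
      rw [hpr, Polynomial.coeff_mul_X_pow', if_neg (by omega)]
  · exfalso
    apply hr
    have h' : (p * X ^ (n + 1)).toLaurent = r.toLaurent := by
      rw [map_mul, Polynomial.toLaurent_X_pow, h, mul_assoc, ← T_add]
      have he : Int.negSucc n + ((n + 1 : ℕ) : ℤ) = 0 := by
        rw [Int.negSucc_eq]; push_cast; ring
      rw [he, T_zero, mul_one]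
    have hrp : r = p * X ^ (n + 1) := (Polynomial.toLaurent_injective h').symm
    rw [hrp, Polynomial.coeff_mul_X_pow', if_neg (by omega)]

lemma dvd_of_laurent [NoZeroDivisors S] {p q : S[X]} (hp : p.coeff 0 ≠ 0)
    (hq : q.coeff 0 ≠ 0) {g : LaurentPolynomial S} {m : ℤ}
    (h : p.toLaurent = g * q.toLaurent * T m) : q ∣ p := by
  have hp0 : p ≠ 0 := fun h0 => hp (by rw [h0, Polynomial.coeff_zero])
  have hg : g ≠ 0 := by
    intro h0
    rw [h0, zero_mul, zero_mul] at h
    exact hp0 (Polynomial.toLaurent_injective (h.trans (map_zero _).symm))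
  obtain ⟨h', k, hk0, hh⟩ := exists_rep g hg
  have heq : (h' * q).toLaurent * T (m - k) = g * q.toLaurent * T m := by
    rw [map_mul, hh, T_sub]
    calc g * T k * q.toLaurent * (T m * T (-k))
        = g * q.toLaurent * T m * (T k * T (-k)) := by ring
      _ = g * q.toLaurent * T m := by rw [← T_add, add_neg_cancel, T_zero, mul_one]
  have hc0 : (h' * q).coeff 0 ≠ 0 := by
    rw [Polynomial.mul_coeff_zero]
    exact mul_ne_zero hk0 hq
  have hpe : p = h' * q :=
    poly_eq_of_toLaurent_eq_mul_T hp hc0 (h.trans heq.symm)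
  exact ⟨h', by rw [hpe, mul_comm]⟩

/-- A semidomain satisfying ACCP has a polynomial semiring satisfying ACCP. -/
lemma accp_polynomial (hS : IsSemidomain S) (hacc : SatisfiesACCP S) :
    SatisfiesACCP (Polynomial S) := by
  classical
  haveI := hS.noZeroDivisors
  intro Q hne hdvd
  haveI : Nontrivial S := by
    rcases subsingleton_or_nontrivial S with h | h
    · exact absurd (Subsingleton.elim (Q 0) 0) (hne 0)
    · exact h
  have hchain : ∀ m n, m ≤ n → Q n ∣ Q m := chain_dvd Q hdvd
  -- pick an index of minimal natDegree
  have hex : ∃ k, ∃ n, (Q n).natDegree = k := ⟨(Q 0).natDegree, 0, rfl⟩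
  obtain ⟨N₀, hN₀⟩ := Nat.find_spec hex
  have hmin : ∀ n, Nat.find hex ≤ (Q n).natDegree := fun n => Nat.find_min' hex ⟨n, rfl⟩
  have hdeg : ∀ n, N₀ ≤ n → (Q n).natDegree = (Q N₀).natDegree := by
    intro n hn
    refine le_antisymm (Polynomial.natDegree_le_of_dvd (hchain N₀ n hn) (hne N₀)) ?_
    rw [hN₀]; exact hmin n
  -- between indices ≥ N₀ the chain only changes by constants
  have hconst : ∀ m, N₀ ≤ m → ∀ n, m ≤ n → ∃ c : S, c ≠ 0 ∧ Q m = Polynomial.C c * Q n := by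
    intro m hm n hmn
    induction n, hmn using Nat.le_induction with
    | base => exact ⟨1, one_ne_zero, by rw [map_one, one_mul]⟩
    | succ n hmn ih =>
      obtain ⟨c, hc, hQ⟩ := ih
      obtain ⟨g, hg⟩ := hdvd n
      have hg0 : g ≠ 0 := by
        intro h0
        exact hne n (by rw [hg, h0, mul_zero])
      have hdg : (Q n).natDegree = (Q (n + 1)).natDegree + g.natDegree := by
        rw [hg, Polynomial.natDegree_mul (hne (n + 1)) hg0]
      have hdn : (Q n).natDegree = (Q (n + 1)).natDegree := by
        rw [hdeg n (hm.trans hmn), hdeg (n + 1) (hm.trans (hmn.trans (Nat.le_succ n)))]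
      have hgdeg : g.natDegree = 0 := by omega
      obtain ⟨r, hgC⟩ := Polynomial.natDegree_eq_zero.mp hgdeg
      have hr0 : r ≠ 0 := by
        intro h0
        apply hg0
        rw [← hgC, h0, map_zero]
      refine ⟨c * r, mul_ne_zero hc hr0, ?_⟩
      rw [hQ, hg, ← hgC, map_mul]; ring
  -- use ACCP on leading coefficients
  have hane : ∀ k, (Q (N₀ + k)).leadingCoeff ≠ 0 :=
    fun k => Polynomial.leadingCoeff_ne_zero.mpr (hne _)
  have hadvd : ∀ k, (Q (N₀ + (k + 1))).leadingCoeff ∣ (Q (N₀ + k)).leadingCoeff := by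
    intro k
    obtain ⟨g, hg⟩ := hdvd (N₀ + k)
    exact ⟨g.leadingCoeff, by rw [hg, Polynomial.leadingCoeff_mul]; rfl⟩
  obtain ⟨K, hK⟩ := hacc (fun k => (Q (N₀ + k)).leadingCoeff) hane hadvd
  refine ⟨N₀ + K, fun n hn => ?_⟩
  obtain ⟨c, hc, hQ⟩ := hconst (N₀ + K) (Nat.le_add_right _ _) n hn
  have hkn : N₀ + (n - N₀) = n := by omega
  have hlead : (Q (N₀ + K)).leadingCoeff = c * (Q (N₀ + (n - N₀))).leadingCoeff := by
    rw [hkn, hQ, Polynomial.leadingCoeff_mul, Polynomial.leadingCoeff_C]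
  obtain ⟨d, hd⟩ := hK (n - N₀) (by omega)
  have hd' : (Q (N₀ + (n - N₀))).leadingCoeff = (Q (N₀ + K)).leadingCoeff * d := hd
  have hcd : c * d = 1 := by
    apply hS.eq_one_of_mul_self (hane (n - N₀))
    calc (c * d) * (Q (N₀ + (n - N₀))).leadingCoeff
        = d * (c * (Q (N₀ + (n - N₀))).leadingCoeff) := by ring
      _ = d * (Q (N₀ + K)).leadingCoeff := by rw [← hlead]
      _ = (Q (N₀ + (n - N₀))).leadingCoeff := by rw [mul_comm]; exact hd'.symm
  have hu : IsUnit (Polynomial.C c) := Polynomial.isUnit_C.mpr (IsUnit.of_mul_eq_one d hcd)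
  obtain ⟨u, hu'⟩ := hu
  refine ⟨(↑u⁻¹ : Polynomial S), ?_⟩
  rw [hQ, ← hu', mul_comm (↑u : Polynomial S) (Q n), mul_assoc, Units.mul_inv, mul_one]

lemma accp_laurent_of_accp (hS : IsSemidomain S) (hacc : SatisfiesACCP S) :
    SatisfiesACCP (LaurentPolynomial S) := by
  haveI := hS.noZeroDivisors
  intro F hne hdvd
  choose P M hP0 hPT using fun n => exists_rep (F n) (hne n)
  choose G hG using hdvd
  have hPdvd : ∀ n, P (n + 1) ∣ P n := by
    intro n
    apply dvd_of_laurent (hP0 n) (hP0 (n + 1)) (g := G n * T (-(M (n + 1)))) (m := M n)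
    rw [hPT n, hPT (n + 1), hG n]
    calc F (n + 1) * G n * T (M n)
        = G n * F (n + 1) * T (M n) * 1 := by ring
      _ = G n * F (n + 1) * T (M n) * (T (-(M (n + 1))) * T (M (n + 1))) := by
          rw [← T_add, neg_add_cancel, T_zero]
      _ = G n * T (-(M (n + 1))) * (F (n + 1) * T (M (n + 1))) * T (M n) := by ring
  have hPne : ∀ n, P n ≠ 0 := fun n h0 => hP0 n (by rw [h0, Polynomial.coeff_zero])
  obtain ⟨N, hN⟩ := accp_polynomial hS hacc P hPne hPdvd
  refine ⟨N, fun n hn => ?_⟩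
  obtain ⟨R, hR⟩ := hN n hn
  refine ⟨R.toLaurent * T (M N - M n), ?_⟩
  have h1 : F n * T (M n) = F N * T (M N) * R.toLaurent := by
    rw [← hPT n, ← hPT N, hR, map_mul]
  calc F n = F n * T (M n) * T (-(M n)) := by
        rw [mul_assoc, ← T_add, add_neg_cancel, T_zero, mul_one]
    _ = F N * T (M N) * R.toLaurent * T (-(M n)) := by rw [h1]
    _ = F N * (R.toLaurent * T (M N - M n)) := by rw [T_sub]; ring

lemma accp_of_accp_laurent (hacc : SatisfiesACCP (LaurentPolynomial S)) :
    SatisfiesACCP S := by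
  intro f hne hdvd
  have hC : ∀ a : S, a ≠ 0 → (LaurentPolynomial.C a : LaurentPolynomial S) ≠ 0 := by
    intro a ha h0
    apply ha
    have h1 : (LaurentPolynomial.C a : LaurentPolynomial S).coeff 0 = a := by
      rw [LaurentPolynomial.C_apply, if_pos rfl]
    rw [h0] at h1
    simpa using h1.symm
  obtain ⟨N, hN⟩ := hacc (fun n => LaurentPolynomial.C (f n))
    (fun n => hC _ (hne n)) (fun n => map_dvd _ (hdvd n))
  refine ⟨N, fun n hn => ?_⟩
  obtain ⟨g, hg⟩ := hN n hn
  refine ⟨g.coeff 0, ?_⟩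
  have h2 : (LaurentPolynomial.C (f n) : LaurentPolynomial S).coeff 0
      = (LaurentPolynomial.C (f N) * g).coeff 0 := by rw [hg]
  rw [LaurentPolynomial.C_apply, if_pos rfl, ← LaurentPolynomial.single_eq_C,
    AddMonoidAlgebra.coeff_single_zero_mul] at h2
  exact h2

end Aux

/-- For a semidomain `S`: `S` satisfies ACCP if and only if the Laurent polynomial semidomain
`S[x^{±1}]` satisfies ACCP. -/
theorem stmt10 (S : Type) [CommSemiring S] (hS : IsSemidomain S) :
    SatisfiesACCP S ↔ SatisfiesACCP (LaurentPolynomial S) := by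
  exact ⟨accp_laurent_of_accp hS, accp_of_accp_laurent⟩
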